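/- Let T ∈ G be hyperbolic. Then there exists S ∈ G such that S ∘ T ∘ S⁻¹ is a normal operator on the Hilbert space H ⊕ ℂ that is not unitary. -/

import Mathlib

noncomputable section

variable {H : Type*} [NormedAddCommGroup H] [InnerProductSpace ℂ H] [CompleteSpace H]

/-- The Hermitian form `A((x,z),(y,w)) = ⟨x,y⟩ - z·conj w` on `H ⊕ ℂ`, linear in the
first argument (the paper's convention); `⟨x,y⟩` (linear in `x`) is `inner ℂ y x` in Mathlib. -/
def formA (u v : H × ℂ) : ℂ :=
  (inner ℂ v.1 u.1 : ℂ) - u.2 * (starRingEnd ℂ) v.2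

/-- The standard inner ℂ product of the Hilbert space `H ⊕ ℂ`, linear in the first argument. -/
def ipStd (u v : H × ℂ) : ℂ :=
  (inner ℂ v.1 u.1 : ℂ) + u.2 * (starRingEnd ℂ) v.2

/-- Membership in the group `G` of bounded bijective linear maps preserving `A`. -/
def memG (T : (H × ℂ) →L[ℂ] (H × ℂ)) : Prop :=
  Function.Bijective T ∧ ∀ u v : H × ℂ, formA (T u) (T v) = formA u v

/-- `T` is elliptic: it has an eigenvector `(x,1)` with `‖x‖ < 1`. -/
def IsEllipticG (T : (H × ℂ) →L[ℂ] (H × ℂ)) : Prop :=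
  ∃ x : H, ‖x‖ < 1 ∧ ∃ μ : ℂ, T (x, 1) = μ • ((x, 1) : H × ℂ)

/-- Points `x` of the closed unit ball with `(x,1)` an eigenvector of `T`. -/
def fixedBall (T : (H × ℂ) →L[ℂ] (H × ℂ)) : Set H :=
  {x : H | ‖x‖ ≤ 1 ∧ ∃ μ : ℂ, T (x, 1) = μ • ((x, 1) : H × ℂ)}

/-- `T` is hyperbolic: not elliptic, with exactly two fixed points in the closed ball. -/
def IsHyperbolicG (T : (H × ℂ) →L[ℂ] (H × ℂ)) : Prop :=
  ¬ IsEllipticG T ∧ ∃ x y : H, x ≠ y ∧ fixedBall T = {x, y}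

/-- `T` is parabolic: not elliptic, with exactly one fixed point in the closed ball. -/
def IsParabolicG (T : (H × ℂ) →L[ℂ] (H × ℂ)) : Prop :=
  ¬ IsEllipticG T ∧ ∃ x : H, fixedBall T = {x}

/-- `M†`, the `A`-orthogonal complement of a subspace `M` of `H ⊕ ℂ`. -/
def daggerA (M : Submodule ℂ (H × ℂ)) : Submodule ℂ (H × ℂ) where
  carrier := {v | ∀ m ∈ M, formA v m = 0}
  add_mem' := by
    intro a b ha hb m hm
    have h1 := ha m hm
    have h2 := hb m hm
    simp only [formA, Prod.fst_add, Prod.snd_add, inner_add_right, add_mul] at *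
    linear_combination h1 + h2
  zero_mem' := by
    intro m hm
    simp [formA]
  smul_mem' := by
    intro c a ha m hm
    have h1 := ha m hm
    simp only [formA, Prod.smul_fst, Prod.smul_snd, inner_smul_right, smul_eq_mul] at *
    linear_combination c * h1

/-- The norm induced by `A` on a subspace where `A` is positive. -/
def nA (v : H × ℂ) : ℝ := Real.sqrt (formA v v).re

/-- Sequential completeness of a subspace for the norm induced by `A`. -/
def CompleteForA (M : Submodule ℂ (H × ℂ)) : Prop :=
  ∀ f : ℕ → H × ℂ, (∀ n, f n ∈ M) →
    (∀ ε : ℝ, 0 < ε → ∃ N : ℕ, ∀ m n : ℕ, N ≤ m → N ≤ n → nA (f m - f n) < ε) →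
    ∃ v ∈ M, ∀ ε : ℝ, 0 < ε → ∃ N : ℕ, ∀ n : ℕ, N ≤ n → nA (f n - v) < ε

end

noncomputable section AuxHyperbolic
namespace HypAux

open ContinuousLinearMap

local notation "conj'" => starRingEnd ℂ

variable {H : Type*} [NormedAddCommGroup H] [InnerProductSpace ℂ H]

lemma fA_add_left (u v w : H × ℂ) : formA (u + v) w = formA u w + formA v w := by
  simp [formA, inner_add_right]; ring

lemma fA_sub_left (u v w : H × ℂ) : formA (u - v) w = formA u w - formA v w := by
  simp [formA, inner_sub_right]; ring

lemma fA_smul_left (z : ℂ) (u w : H × ℂ) : formA (z • u) w = z * formA u w := by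
  simp [formA, inner_smul_right]; ring

lemma fA_add_right (u v w : H × ℂ) : formA u (v + w) = formA u v + formA u w := by
  simp [formA, inner_add_left]; ring

lemma fA_sub_right (u v w : H × ℂ) : formA u (v - w) = formA u v - formA u w := by
  simp [formA, inner_sub_left]; ring

lemma fA_smul_right (z : ℂ) (u w : H × ℂ) : formA u (z • w) = conj' z * formA u w := by
  simp [formA, inner_smul_left]; ring

lemma fA_conj (u v : H × ℂ) : formA v u = conj' (formA u v) := by
  simp only [formA, map_sub, map_mul, inner_conj_symm, Complex.conj_conj]; ring

lemma ip_smul (z w : ℂ) (u v : H × ℂ) :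
    ipStd (z • u) (w • v) = z * conj' w * ipStd u v := by
  simp [ipStd, inner_smul_left, inner_smul_right]; ring

/-! ### The fundamental symmetry `J` -/

def Jm : (H × ℂ) →L[ℂ] (H × ℂ) := (fst ℂ H ℂ).prod (-(snd ℂ H ℂ))

lemma Jm_apply (v : H × ℂ) : Jm v = (v.1, -v.2) := rfl

lemma Jm_Jm (v : H × ℂ) : Jm (Jm v) = v := by simp [Jm_apply]

lemma ip_Jm (a b : H × ℂ) : ipStd a (Jm b) = formA a b := by
  simp [ipStd, formA, Jm_apply]; ring

lemma fA_Jm (a b : H × ℂ) : formA a (Jm b) = ipStd a b := by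
  simp [ipStd, formA, Jm_apply]

/-- `Afl w` is the continuous linear functional `v ↦ formA v w`. -/
def Afl (w : H × ℂ) : (H × ℂ) →L[ℂ] ℂ :=
  (innerSL ℂ w.1).comp (fst ℂ H ℂ) - (conj' w.2) • (snd ℂ H ℂ)

lemma Afl_apply (w v : H × ℂ) : Afl w v = formA v w := by
  simp [Afl, formA]; ring

/-! ### Existence of the real parameter `s` -/

lemma exists_root (p nsq kap : ℝ) (hp : p < 0) (hnsq : 0 < nsq)
    (hdisc : 16*p^2 - 4*kap = 8*(-p)*nsq) :
    ∃ s : ℝ, kap*s^2 - 4*p*s + 1 = 0 ∧ s*(2*p + nsq) ≠ 1 := by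
  have hp0 : p ≠ 0 := ne_of_lt hp
  by_cases hk : kap = 0
  · have h2 : (-8*p) * (2*p + nsq) = 0 := by linear_combination -hdisc - 4*hk
    have hm : 2*p + nsq = 0 :=
      (mul_eq_zero.mp h2).resolve_left (by intro h; apply hp0; linarith [h] )
    refine ⟨1/(4*p), by rw [hk]; field_simp; ring, by rw [hm]; simp⟩
  · have hnp : 0 < -p := neg_pos.mpr hp
    have hΔ : 0 < 16*p^2 - 4*kap := by nlinarith
    set r := Real.sqrt (16*p^2 - 4*kap) with hrdef
    have hr2 : r^2 = 16*p^2 - 4*kap := Real.sq_sqrt (le_of_lt hΔ)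
    have hrpos : 0 < r := Real.sqrt_pos.mpr hΔ
    have hs1 : kap*((4*p+r)/(2*kap))^2 - 4*p*((4*p+r)/(2*kap)) + 1 = 0 := by
      have hrw : kap*((4*p+r)/(2*kap))^2 - 4*p*((4*p+r)/(2*kap)) + 1
          = (r^2 - (16*p^2 - 4*kap))/(4*kap) := by field_simp; ring
      rw [hrw, hr2]; simp
    have hs2 : kap*((4*p-r)/(2*kap))^2 - 4*p*((4*p-r)/(2*kap)) + 1 = 0 := by
      have hrw : kap*((4*p-r)/(2*kap))^2 - 4*p*((4*p-r)/(2*kap)) + 1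
          = (r^2 - (16*p^2 - 4*kap))/(4*kap) := by field_simp; ring
      rw [hrw, hr2]; simp
    by_cases h1 : ((4*p+r)/(2*kap))*(2*p+nsq) = 1
    · refine ⟨(4*p-r)/(2*kap), hs2, ?_⟩
      intro h2
      have hd : ((4*p+r)/(2*kap) - (4*p-r)/(2*kap))*(2*p+nsq) = 0 := by
        rw [sub_mul, h1, h2]; ring
      have hne : (4*p+r)/(2*kap) - (4*p-r)/(2*kap) ≠ 0 := by
        have : (4*p+r)/(2*kap) - (4*p-r)/(2*kap) = r/kap := by field_simp; ring
        rw [this]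
        exact div_ne_zero (ne_of_gt hrpos) hk
      have hm0 : 2*p + nsq = 0 := (mul_eq_zero.mp hd).resolve_left hne
      rw [hm0] at h2; simp at h2
    · exact ⟨(4*p+r)/(2*kap), hs1, h1⟩

/-! ### `√2` as a complex scalar -/

def r2 : ℂ := (Real.sqrt 2 : ℝ)

lemma r2_mul : r2 * r2 = 2 := by
  rw [r2]; norm_cast; exact Real.mul_self_sqrt (by norm_num)

lemma conj_r2 : conj' r2 = r2 := Complex.conj_ofReal _

lemma r2_ne : r2 ≠ 0 := by
  intro h
  have : r2 * r2 = 0 := by rw [h, mul_zero]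
  rw [r2_mul] at this; norm_num at this

lemma conj_r2_inv : conj' r2⁻¹ = r2⁻¹ := by rw [map_inv₀, conj_r2]

/-! ### The context of a hyperbolic element -/

structure Ctx (H : Type*) [NormedAddCommGroup H] [InnerProductSpace ℂ H] where
  x : H
  y : H
  μ : ℂ
  ν : ℂ
  T : (H × ℂ) →L[ℂ] (H × ℂ)
  Ti : (H × ℂ) →L[ℂ] (H × ℂ)
  s : ℝ
  c : ℂ
  hxy : x ≠ y
  hnx : ‖x‖ = 1
  hny : ‖y‖ = 1
  hcdef : c = (inner ℂ y x : ℂ) - 1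
  hA : ∀ u v : H × ℂ, formA (T u) (T v) = formA u v
  hTx : T (x, 1) = μ • ((x, 1) : H × ℂ)
  hTy : T (y, 1) = ν • ((y, 1) : H × ℂ)
  hTi1 : ∀ z, T (Ti z) = z
  hTi2 : ∀ z, Ti (T z) = z
  hmn : μ * (starRingEnd ℂ) ν = 1
  hquad : (2*Complex.normSq c + 2*Complex.normSq c * c.re + 2*(c^2).re) * s^2
      - 4*c.re*s + 1 = 0
  hgam : s * (2*c.re + Complex.normSq c) ≠ 1

namespace Ctx

variable {H : Type*} [NormedAddCommGroup H] [InnerProductSpace ℂ H] (K : Ctx H)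

def g : H := ((K.s : ℂ) * conj' K.c) • K.x + ((K.s : ℂ) * K.c) • K.y

def e : H := (((‖K.x - K.y‖ : ℝ) : ℂ))⁻¹ • (K.x - K.y)

def u0 : H × ℂ := (K.x, 1)

def w0 : H × ℂ := (K.y, 1)

def wp : H × ℂ := ((conj' K.c)⁻¹) • K.w0

def a0 : ℂ := (K.μ + K.ν)/2

def b0 : ℂ := (K.μ - K.ν)/2

def f1 : H × ℂ := r2⁻¹ • (K.u0 + K.wp)

def f2 : H × ℂ := r2⁻¹ • (K.u0 - K.wp)

def nn (v : H × ℂ) : H × ℂ := v - (formA v K.f1) • K.f1 + (formA v K.f2) • K.f2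

def tau : H →L[ℂ] H := ContinuousLinearMap.id ℂ H - (innerSL ℂ K.x).smulRight K.g

def S : (H × ℂ) →L[ℂ] (H × ℂ) :=
  ((K.tau.comp ((fst ℂ H ℂ) - (Afl K.f1).smulRight K.f1.1 + (Afl K.f2).smulRight K.f2.1))
      + (Afl K.f1).smulRight K.e).prod (-(Afl K.f2))

def afun : (H × ℂ) →L[ℂ] ℂ := (innerSL ℂ K.e).comp (fst ℂ H ℂ)

def kpfun : (H × ℂ) →L[ℂ] H := (fst ℂ H ℂ) - K.afun.smulRight K.e

def lamfun : (H × ℂ) →L[ℂ] ℂ :=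
  (1 - (inner ℂ K.x K.g : ℂ))⁻¹ • ((innerSL ℂ K.x).comp K.kpfun)

def hfun : (H × ℂ) →L[ℂ] H := K.kpfun + K.lamfun.smulRight K.g

def Sinv : (H × ℂ) →L[ℂ] (H × ℂ) :=
  K.afun.smulRight K.f1 + (snd ℂ H ℂ).smulRight K.f2 + K.hfun.prod K.lamfun

def Phi : (H × ℂ) →L[ℂ] (H × ℂ) :=
  ContinuousLinearMap.id ℂ (H × ℂ) + (Afl K.f2).smulRight ((2:ℂ) • K.f2)

/-! ### Basic facts -/

lemma c_ne : K.c ≠ 0 := by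
  rw [K.hcdef]
  intro h
  have hd : (inner ℂ K.y K.x : ℂ) = 1 := by linear_combination h
  exact K.hxy ((inner_eq_one_iff_of_norm_eq_one K.hny K.hnx).mp hd).symm

lemma cc_ne : conj' K.c ≠ 0 := by
  intro h
  apply K.c_ne
  have := congrArg conj' h
  simpa using this

lemma dre_lt : ((inner ℂ K.y K.x : ℂ)).re < 1 := by
  set d := (inner ℂ K.y K.x : ℂ) with hd
  have habs : ‖d‖ ≤ 1 := by
    have h := norm_inner_le_norm (𝕜 := ℂ) K.y K.x
    rw [K.hnx, K.hny] at h
    simpa using h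
  have h1 : d.re ≤ 1 := le_trans (Complex.re_le_norm d) habs
  rcases eq_or_lt_of_le h1 with h | h
  · exfalso
    have hsq : Complex.normSq d ≤ 1 := by
      rw [← Complex.sq_norm]; nlinarith [norm_nonneg d]
    have him : d.im = 0 := by
      have := Complex.normSq_apply d
      nlinarith
    have hd1 : d = 1 := by
      apply Complex.ext <;> simp [h, him]
    exact K.hxy ((inner_eq_one_iff_of_norm_eq_one K.hny K.hnx).mp hd1).symm
  · exact h

lemma p_neg : K.c.re < 0 := by
  rw [K.hcdef]
  simpa using sub_neg.mpr K.dre_lt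

lemma nsq_pos : 0 < Complex.normSq K.c := Complex.normSq_pos.mpr K.c_ne

lemma inner_xx : (inner ℂ K.x K.x : ℂ) = 1 := by
  rw [inner_self_eq_norm_sq_to_K, K.hnx]; norm_num

lemma inner_yy : (inner ℂ K.y K.y : ℂ) = 1 := by
  rw [inner_self_eq_norm_sq_to_K, K.hny]; norm_num

lemma inner_yx : (inner ℂ K.y K.x : ℂ) = K.c + 1 := by rw [K.hcdef]; ring

lemma inner_xy : (inner ℂ K.x K.y : ℂ) = conj' K.c + 1 := by
  rw [← inner_conj_symm K.x K.y, K.inner_yx, map_add, map_one]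

/-! ### Gram facts for `u0, w0, wp, f1, f2` -/

lemma A_u0_u0 : formA K.u0 K.u0 = 0 := by simp [formA, u0, K.inner_xx, K.hnx]

lemma A_w0_w0 : formA K.w0 K.w0 = 0 := by simp [formA, w0, K.inner_yy, K.hny]

lemma A_u0_w0 : formA K.u0 K.w0 = K.c := by simp [formA, u0, w0, K.inner_yx]

lemma A_w0_u0 : formA K.w0 K.u0 = conj' K.c := by simp [formA, u0, w0, K.inner_xy]

lemma A_u0_wp : formA K.u0 K.wp = 1 := by
  rw [wp, fA_smul_right, map_inv₀, Complex.conj_conj, K.A_u0_w0]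
  exact inv_mul_cancel₀ K.c_ne

lemma A_wp_u0 : formA K.wp K.u0 = 1 := by
  rw [wp, fA_smul_left, K.A_w0_u0]
  exact inv_mul_cancel₀ K.cc_ne

lemma A_wp_wp : formA K.wp K.wp = 0 := by
  rw [wp, fA_smul_left, fA_smul_right, K.A_w0_w0]; ring

lemma A_f1_f1 : formA K.f1 K.f1 = 1 := by
  rw [f1, fA_smul_left, fA_smul_right, conj_r2_inv, fA_add_left, fA_add_right, fA_add_right,
    K.A_u0_u0, K.A_u0_wp, K.A_wp_u0, K.A_wp_wp]
  have hne := r2_ne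
  have := r2_mul
  field_simp
  linear_combination -this

lemma A_f2_f2 : formA K.f2 K.f2 = -1 := by
  rw [f2, fA_smul_left, fA_smul_right, conj_r2_inv, fA_sub_left, fA_sub_right, fA_sub_right,
    K.A_u0_u0, K.A_u0_wp, K.A_wp_u0, K.A_wp_wp]
  have hne := r2_ne
  have := r2_mul
  field_simp
  linear_combination this

lemma A_f1_f2 : formA K.f1 K.f2 = 0 := by
  rw [f1, f2, fA_smul_left, fA_smul_right, conj_r2_inv, fA_add_left, fA_sub_right, fA_sub_right,
    K.A_u0_u0, K.A_u0_wp, K.A_wp_u0, K.A_wp_wp]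
  ring

lemma A_f2_f1 : formA K.f2 K.f1 = 0 := by
  rw [f2, f1, fA_smul_left, fA_smul_right, conj_r2_inv, fA_sub_left, fA_add_right, fA_add_right,
    K.A_u0_u0, K.A_u0_wp, K.A_wp_u0, K.A_wp_wp]
  ring


/-! ### Decomposition along `f1, f2` -/

lemma A_nn_f1 (v : H × ℂ) : formA (K.nn v) K.f1 = 0 := by
  rw [nn, fA_add_left, fA_sub_left, fA_smul_left, fA_smul_left, K.A_f1_f1, K.A_f2_f1]
  ring

lemma A_nn_f2 (v : H × ℂ) : formA (K.nn v) K.f2 = 0 := by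
  rw [nn, fA_add_left, fA_sub_left, fA_smul_left, fA_smul_left, K.A_f1_f2, K.A_f2_f2]
  ring

lemma u0_eq : K.u0 = (r2/2) • K.f1 + (r2/2) • K.f2 := by
  have h := r2_mul
  have hne := r2_ne
  rw [f1, f2]
  match_scalars <;> (field_simp; try ring)

lemma wp_eq : K.wp = (r2/2) • K.f1 - (r2/2) • K.f2 := by
  have h := r2_mul
  have hne := r2_ne
  rw [f1, f2]
  match_scalars <;> (field_simp; try ring)

lemma w0_eq : K.w0 = conj' K.c • K.wp := by
  rw [wp, smul_smul, mul_inv_cancel₀ K.cc_ne, one_smul]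

lemma A_nn_u0 (v : H × ℂ) : formA (K.nn v) K.u0 = 0 := by
  rw [K.u0_eq, fA_add_right, fA_smul_right, fA_smul_right, K.A_nn_f1, K.A_nn_f2]
  ring

lemma A_nn_wp (v : H × ℂ) : formA (K.nn v) K.wp = 0 := by
  rw [K.wp_eq, fA_sub_right, fA_smul_right, fA_smul_right, K.A_nn_f1, K.A_nn_f2]
  ring

lemma A_nn_w0 (v : H × ℂ) : formA (K.nn v) K.w0 = 0 := by
  rw [K.w0_eq, fA_smul_right, K.A_nn_wp]
  ring

lemma nn_x (v : H × ℂ) : (inner ℂ K.x (K.nn v).1 : ℂ) = (K.nn v).2 := by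
  have h := K.A_nn_u0 v
  simp only [formA, u0, map_one, mul_one] at h
  linear_combination h

lemma nn_y (v : H × ℂ) : (inner ℂ K.y (K.nn v).1 : ℂ) = (K.nn v).2 := by
  have h := K.A_nn_w0 v
  simp only [formA, w0, map_one, mul_one] at h
  linear_combination h

lemma decomp (v : H × ℂ) :
    v = (formA v K.f1) • K.f1 - (formA v K.f2) • K.f2 + K.nn v := by
  rw [nn]; abel

/-! ### Inner products with `g` and `e` -/

lemma inner_x_g : (inner ℂ K.x K.g : ℂ) = (K.s : ℂ) * (K.c + conj' K.c + K.c * conj' K.c) := by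
  simp only [g, inner_add_right, inner_smul_right, K.inner_xx, K.inner_xy]
  ring

lemma inner_y_g : (inner ℂ K.y K.g : ℂ) = (K.s : ℂ) * (K.c + conj' K.c + K.c * conj' K.c) := by
  simp only [g, inner_add_right, inner_smul_right, K.inner_yy, K.inner_yx]
  ring

lemma norm_xy_ne : (‖K.x - K.y‖ : ℝ) ≠ 0 := by
  simpa [norm_ne_zero_iff, sub_ne_zero] using K.hxy

lemma inner_e_g : (inner ℂ K.e K.g : ℂ) = 0 := by
  rw [e, inner_smul_left, inner_sub_left, K.inner_x_g, K.inner_y_g]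
  ring

lemma inner_e_e : (inner ℂ K.e K.e : ℂ) = 1 := by
  have hne : ((‖K.x - K.y‖ : ℝ) : ℂ) ≠ 0 := Complex.ofReal_ne_zero.mpr K.norm_xy_ne
  rw [e, inner_smul_left, inner_smul_right, inner_self_eq_norm_sq_to_K, map_inv₀,
    Complex.conj_ofReal]
  field_simp
  norm_cast

lemma inner_e_k (k : H) (hk : (inner ℂ K.x k : ℂ) = inner ℂ K.y k) :
    (inner ℂ K.e k : ℂ) = 0 := by
  rw [e, inner_smul_left, inner_sub_left, hk]
  ring

lemma inner_k_e (k : H) (hk : (inner ℂ K.x k : ℂ) = inner ℂ K.y k) :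
    (inner ℂ k K.e : ℂ) = 0 := by
  rw [← inner_conj_symm, K.inner_e_k k hk, map_zero]

lemma inner_g_right (k : H) (hk : (inner ℂ K.x k : ℂ) = inner ℂ K.y k) :
    (inner ℂ K.g k : ℂ) = (K.s : ℂ) * (K.c + conj' K.c) * (inner ℂ K.x k : ℂ) := by
  simp only [g, inner_add_left, inner_smul_left, map_mul, Complex.conj_ofReal,
    Complex.conj_conj, ← hk]
  ring

lemma inner_right_g (k : H) (hk : (inner ℂ K.x k : ℂ) = inner ℂ K.y k) :
    (inner ℂ k K.g : ℂ) = (K.s : ℂ) * (K.c + conj' K.c) * conj' (inner ℂ K.x k : ℂ) := by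
  rw [← inner_conj_symm k K.g, K.inner_g_right k hk]
  simp only [map_mul, map_add, Complex.conj_ofReal, Complex.conj_conj]
  ring

/-! ### Coercion identities and the constraint -/

lemma nsqC : ((Complex.normSq K.c : ℝ) : ℂ) = K.c * conj' K.c := by
  rw [Complex.mul_conj]

lemma preC : ((K.c.re : ℝ) : ℂ) = (K.c + conj' K.c) / 2 := by
  rw [Complex.add_conj]; push_cast; ring

lemma sqreC : (((K.c ^ 2).re : ℝ) : ℂ) = (K.c ^ 2 + (conj' K.c) ^ 2) / 2 := by
  rw [← map_pow, Complex.add_conj]; push_cast; ring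

lemma inner_g_g : (inner ℂ K.g K.g : ℂ)
    = (K.s : ℂ) ^ 2 * (2 * (K.c * conj' K.c) + (K.c * conj' K.c) * (K.c + conj' K.c)
        + (K.c ^ 2 + (conj' K.c) ^ 2)) := by
  simp only [g, inner_add_left, inner_add_right, inner_smul_left, inner_smul_right,
    K.inner_xx, K.inner_yy, K.inner_xy, K.inner_yx, map_mul, Complex.conj_ofReal,
    Complex.conj_conj]
  ring

lemma hquadC : (2 * (K.c * conj' K.c) + (K.c * conj' K.c) * (K.c + conj' K.c)
      + (K.c ^ 2 + (conj' K.c) ^ 2)) * (K.s : ℂ) ^ 2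
      - 2 * (K.c + conj' K.c) * (K.s : ℂ) + 1 = 0 := by
  have h := congrArg (fun t : ℝ => (t : ℂ)) K.hquad
  push_cast at h
  rw [K.nsqC, K.preC, K.sqreC] at h
  linear_combination h

lemma constraintC : (K.s : ℂ) * (K.c + conj' K.c) * 2 - (inner ℂ K.g K.g : ℂ) = 1 := by
  rw [K.inner_g_g]
  linear_combination -K.hquadC

lemma gam_ne : (inner ℂ K.x K.g : ℂ) ≠ 1 := by
  have hcoe : (inner ℂ K.x K.g : ℂ) = ((K.s * (2 * K.c.re + Complex.normSq K.c) : ℝ) : ℂ) := by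
    rw [K.inner_x_g]
    push_cast
    rw [K.nsqC, K.preC]
    ring
  rw [hcoe]
  intro h
  apply K.hgam
  exact_mod_cast h

lemma one_minus_gam_ne : (1 : ℂ) - (inner ℂ K.x K.g : ℂ) ≠ 0 :=
  sub_ne_zero.mpr (Ne.symm K.gam_ne)

/-! ### The map `τ` -/

lemma tau_apply (k : H) : K.tau k = k - (inner ℂ K.x k : ℂ) • K.g := by
  simp [tau]

lemma inner_e_tau (k : H) (hk : (inner ℂ K.x k : ℂ) = inner ℂ K.y k) :
    (inner ℂ K.e (K.tau k) : ℂ) = 0 := by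
  rw [K.tau_apply, inner_sub_right, inner_smul_right, K.inner_e_g, K.inner_e_k k hk]
  ring

lemma inner_tau_e (k : H) (hk : (inner ℂ K.x k : ℂ) = inner ℂ K.y k) :
    (inner ℂ (K.tau k) K.e : ℂ) = 0 := by
  rw [← inner_conj_symm, K.inner_e_tau k hk, map_zero]

lemma inner_tau_tau (k k' : H) (hk : (inner ℂ K.x k : ℂ) = inner ℂ K.y k)
    (hk' : (inner ℂ K.x k' : ℂ) = inner ℂ K.y k') :
    (inner ℂ (K.tau k') (K.tau k) : ℂ)
      = (inner ℂ k' k : ℂ) - (inner ℂ K.x k : ℂ) * conj' (inner ℂ K.x k' : ℂ) := by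
  rw [K.tau_apply, K.tau_apply, inner_sub_left, inner_sub_right, inner_sub_right,
    inner_smul_left, inner_smul_right, inner_smul_right, inner_smul_left,
    K.inner_g_right k hk, K.inner_right_g k' hk']
  linear_combination -((inner ℂ K.x k : ℂ) * conj' (inner ℂ K.x k' : ℂ)) * K.constraintC


/-! ### The map `S` -/

lemma nn_fst (v : H × ℂ) :
    (K.nn v).1 = v.1 - (formA v K.f1) • K.f1.1 + (formA v K.f2) • K.f2.1 := by
  simp [nn]

lemma S_apply (v : H × ℂ) :
    K.S v = ((formA v K.f1) • K.e + K.tau ((K.nn v).1), -(formA v K.f2)) := by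
  have h1 : (K.nn v).1 = v.1 - formA v K.f1 • K.f1.1 + formA v K.f2 • K.f2.1 := K.nn_fst v
  simp only [S, ContinuousLinearMap.prod_apply, ContinuousLinearMap.add_apply,
    ContinuousLinearMap.coe_comp', Function.comp_apply, ContinuousLinearMap.sub_apply,
    ContinuousLinearMap.coe_fst', ContinuousLinearMap.smulRight_apply,
    ContinuousLinearMap.neg_apply, Afl_apply, h1]
  rw [add_comm]

lemma lamfun_apply (w : H × ℂ) :
    K.lamfun w = (1 - (inner ℂ K.x K.g : ℂ))⁻¹ * (inner ℂ K.x (K.kpfun w) : ℂ) := by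
  simp [lamfun]

lemma kpfun_apply (w : H × ℂ) : K.kpfun w = w.1 - (inner ℂ K.e w.1 : ℂ) • K.e := by
  simp [kpfun, afun]

lemma hfun_apply (w : H × ℂ) : K.hfun w = K.kpfun w + K.lamfun w • K.g := by
  simp [hfun]

lemma Sinv_apply (w : H × ℂ) :
    K.Sinv w = (inner ℂ K.e w.1 : ℂ) • K.f1 + w.2 • K.f2 + (K.hfun w, K.lamfun w) := by
  simp [Sinv, afun]

lemma inner_e_kp (w : H × ℂ) : (inner ℂ K.e (K.kpfun w) : ℂ) = 0 := by
  rw [K.kpfun_apply, inner_sub_right, inner_smul_right, K.inner_e_e]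
  ring

lemma inner_x_kp (w : H × ℂ) :
    (inner ℂ K.x (K.kpfun w) : ℂ) = (1 - (inner ℂ K.x K.g : ℂ)) * K.lamfun w := by
  rw [K.lamfun_apply]
  field_simp [K.one_minus_gam_ne]

lemma xmy_eq : ((‖K.x - K.y‖ : ℝ) : ℂ) • K.e = K.x - K.y := by
  rw [e, smul_smul, mul_inv_cancel₀ (Complex.ofReal_ne_zero.mpr K.norm_xy_ne), one_smul]

lemma inner_y_kp (w : H × ℂ) :
    (inner ℂ K.y (K.kpfun w) : ℂ) = (inner ℂ K.x (K.kpfun w) : ℂ) := by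
  have h : (inner ℂ (K.x - K.y) (K.kpfun w) : ℂ) = 0 := by
    rw [← K.xmy_eq, inner_smul_left, K.inner_e_kp]
    ring
  rw [inner_sub_left] at h
  linear_combination -h

lemma inner_x_hfun (w : H × ℂ) : (inner ℂ K.x (K.hfun w) : ℂ) = K.lamfun w := by
  rw [K.hfun_apply, inner_add_right, inner_smul_right]
  have h2 := K.inner_x_kp w
  linear_combination h2

lemma inner_y_hfun (w : H × ℂ) : (inner ℂ K.y (K.hfun w) : ℂ) = K.lamfun w := by
  have hyg : (inner ℂ K.y K.g : ℂ) = (inner ℂ K.x K.g : ℂ) := by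
    rw [K.inner_x_g, K.inner_y_g]
  rw [K.hfun_apply, inner_add_right, inner_smul_right, hyg, K.inner_y_kp]
  have h2 := K.inner_x_kp w
  linear_combination h2

lemma A_nw_u0 (w : H × ℂ) : formA ((K.hfun w, K.lamfun w) : H × ℂ) K.u0 = 0 := by
  simp only [formA, u0, map_one, mul_one]
  rw [K.inner_x_hfun]
  ring

lemma A_nw_w0 (w : H × ℂ) : formA ((K.hfun w, K.lamfun w) : H × ℂ) K.w0 = 0 := by
  simp only [formA, w0, map_one, mul_one]
  rw [K.inner_y_hfun]
  ring

lemma A_nw_f1 (w : H × ℂ) : formA ((K.hfun w, K.lamfun w) : H × ℂ) K.f1 = 0 := by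
  rw [f1, fA_smul_right, fA_add_right, wp, fA_smul_right, K.A_nw_u0, K.A_nw_w0]
  ring

lemma A_nw_f2 (w : H × ℂ) : formA ((K.hfun w, K.lamfun w) : H × ℂ) K.f2 = 0 := by
  rw [f2, fA_smul_right, fA_sub_right, wp, fA_smul_right, K.A_nw_u0, K.A_nw_w0]
  ring

lemma A_Sinv_f1 (w : H × ℂ) : formA (K.Sinv w) K.f1 = (inner ℂ K.e w.1 : ℂ) := by
  rw [K.Sinv_apply, fA_add_left, fA_add_left, fA_smul_left, fA_smul_left,
    K.A_f1_f1, K.A_f2_f1, K.A_nw_f1]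
  ring

lemma A_Sinv_f2 (w : H × ℂ) : formA (K.Sinv w) K.f2 = -w.2 := by
  rw [K.Sinv_apply, fA_add_left, fA_add_left, fA_smul_left, fA_smul_left,
    K.A_f1_f2, K.A_f2_f2, K.A_nw_f2]
  ring

lemma nn_Sinv (w : H × ℂ) : K.nn (K.Sinv w) = ((K.hfun w, K.lamfun w) : H × ℂ) := by
  rw [nn, K.A_Sinv_f1, K.A_Sinv_f2, K.Sinv_apply]
  module

lemma right_inv : Function.RightInverse K.Sinv K.S := by
  intro w
  rw [K.S_apply, K.A_Sinv_f1, K.A_Sinv_f2, K.nn_Sinv]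
  have htau : K.tau (((K.hfun w, K.lamfun w) : H × ℂ)).1 = K.kpfun w := by
    show K.tau (K.hfun w) = K.kpfun w
    rw [K.tau_apply, K.inner_x_hfun, K.hfun_apply]
    abel
  rw [htau]
  have : (inner ℂ K.e w.1 : ℂ) • K.e + K.kpfun w = w.1 := by
    rw [K.kpfun_apply]
    abel
  rw [this]
  simp

/-! ### `S` preserves the form `A` -/

lemma A_f1_nn (v : H × ℂ) : formA K.f1 (K.nn v) = 0 := by
  rw [fA_conj, K.A_nn_f1, map_zero]

lemma A_f2_nn (v : H × ℂ) : formA K.f2 (K.nn v) = 0 := by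
  rw [fA_conj, K.A_nn_f2, map_zero]

lemma A_decomp (u v : H × ℂ) :
    formA u v = formA u K.f1 * conj' (formA v K.f1) - formA u K.f2 * conj' (formA v K.f2)
      + formA (K.nn u) (K.nn v) := by
  conv_lhs => rw [K.decomp u, K.decomp v]
  simp only [fA_add_left, fA_sub_left, fA_smul_left, fA_add_right, fA_sub_right, fA_smul_right,
    K.A_f1_f1, K.A_f1_f2, K.A_f2_f1, K.A_f2_f2, K.A_nn_f1, K.A_nn_f2, K.A_f1_nn, K.A_f2_nn]
  ring

lemma formA_pair (p q : H) (z w : ℂ) :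
    formA ((p, z) : H × ℂ) ((q, w) : H × ℂ) = (inner ℂ q p : ℂ) - z * conj' w := rfl

lemma SA (u v : H × ℂ) : formA (K.S u) (K.S v) = formA u v := by
  have hku : (inner ℂ K.x (K.nn u).1 : ℂ) = inner ℂ K.y (K.nn u).1 := by
    rw [K.nn_x, K.nn_y]
  have hkv : (inner ℂ K.x (K.nn v).1 : ℂ) = inner ℂ K.y (K.nn v).1 := by
    rw [K.nn_x, K.nn_y]
  rw [K.S_apply, K.S_apply, formA_pair]
  rw [inner_add_left, inner_add_right, inner_add_right, inner_smul_left, inner_smul_right,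
    inner_smul_right, inner_smul_left, K.inner_e_e, K.inner_e_tau _ hku, K.inner_tau_e _ hkv,
    K.inner_tau_tau _ _ hku hkv, K.nn_x u, K.nn_x v]
  rw [K.A_decomp u v]
  simp only [formA]
  simp only [map_sub, map_add, map_mul, map_neg, Complex.conj_conj]
  ring

lemma S_inj : Function.Injective K.S := by
  intro u v huv
  have h0 : K.S (u - v) = 0 := by rw [map_sub, huv, sub_self]
  have h1 : formA (u - v) (((u - v).1, -(u - v).2) : H × ℂ) = 0 := by
    rw [← K.SA (u - v) (((u - v).1, -(u - v).2) : H × ℂ), h0]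
    simp [formA]
  simp only [formA, map_neg] at h1
  have hx : (inner ℂ ((u-v).1) ((u-v).1) : ℂ) = ((‖(u - v).1‖^2 : ℝ) : ℂ) := by
    exact_mod_cast inner_self_eq_norm_sq_to_K (𝕜 := ℂ) (u-v).1
  rw [hx] at h1
  have h2 : ((‖(u-v).1‖^2 : ℝ) : ℂ) + ((Complex.normSq ((u-v).2) : ℝ) : ℂ) = 0 := by
    rw [← Complex.mul_conj]
    linear_combination h1
  have h3 : ‖(u - v).1‖^2 + Complex.normSq ((u - v).2) = 0 := by
    exact_mod_cast h2
  have h4 : (u - v).1 = 0 := by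
    have h5' : ‖(u - v).1‖^2 = 0 :=
      le_antisymm (by linarith [Complex.normSq_nonneg ((u - v).2)]) (sq_nonneg _)
    have h5 : ‖(u - v).1‖ = 0 := sq_eq_zero_iff.mp h5'
    simpa using h5
  have h6 : (u - v).2 = 0 := by
    have h7 : Complex.normSq ((u - v).2) = 0 :=
      le_antisymm (by linarith [sq_nonneg (‖(u - v).1‖)]) (Complex.normSq_nonneg _)
    exact Complex.normSq_eq_zero.mp h7
  have hz : u - v = 0 := by
    rw [Prod.ext_iff]
    exact ⟨by simpa using h4, by simpa using h6⟩
  exact sub_eq_zero.mp hz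

lemma left_inv : Function.LeftInverse K.Sinv K.S := by
  intro v
  apply K.S_inj
  rw [K.right_inv (K.S v)]

/-- `S` as a continuous linear equivalence. -/
def Se : (H × ℂ) ≃L[ℂ] (H × ℂ) :=
  ContinuousLinearEquiv.equivOfInverse K.S K.Sinv K.left_inv K.right_inv

lemma Se_apply (v : H × ℂ) : K.Se v = K.S v := rfl

lemma Se_symm_apply (v : H × ℂ) : K.Se.symm v = K.Sinv v := rfl


/-! ### The flip `Φ` and `J ∘ S = S ∘ Φ` -/

lemma Phi_apply (v : H × ℂ) : K.Phi v = v + (2 * formA v K.f2) • K.f2 := by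
  simp only [Phi, ContinuousLinearMap.add_apply, ContinuousLinearMap.coe_id', id_eq,
    ContinuousLinearMap.smulRight_apply, Afl_apply]
  match_scalars <;> ring

lemma A_Phi_f1 (q : H × ℂ) : formA (K.Phi q) K.f1 = formA q K.f1 := by
  rw [K.Phi_apply, fA_add_left, fA_smul_left, K.A_f2_f1]
  ring

lemma A_Phi_f2 (q : H × ℂ) : formA (K.Phi q) K.f2 = -formA q K.f2 := by
  rw [K.Phi_apply, fA_add_left, fA_smul_left, K.A_f2_f2]
  ring

lemma nn_Phi (q : H × ℂ) : K.nn (K.Phi q) = K.nn q := by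
  rw [nn, K.A_Phi_f1, K.A_Phi_f2, K.Phi_apply, nn]
  module

lemma JS (q : H × ℂ) : Jm (K.S q) = K.S (K.Phi q) := by
  rw [K.S_apply, K.S_apply, K.A_Phi_f1, K.A_Phi_f2, K.nn_Phi, Jm_apply]
  try simp

/-! ### Action of `T` and `Ti` -/

lemma Tu0 : K.T K.u0 = K.μ • K.u0 := K.hTx

lemma Tw0 : K.T K.w0 = K.ν • K.w0 := K.hTy

lemma Twp : K.T K.wp = K.ν • K.wp := by
  rw [wp, map_smul, K.Tw0, smul_comm]

lemma Tf1 : K.T K.f1 = K.a0 • K.f1 + K.b0 • K.f2 := by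
  rw [f1, map_smul, map_add, K.Tu0, K.Twp, f2]
  simp only [f1, a0, b0]
  match_scalars <;> ring

lemma Tf2 : K.T K.f2 = K.b0 • K.f1 + K.a0 • K.f2 := by
  rw [f2, map_smul, map_sub, K.Tu0, K.Twp, f1]
  simp only [f2, a0, b0]
  match_scalars <;> ring

lemma mu_ne : K.μ ≠ 0 := by
  intro h
  have := K.hmn
  rw [h] at this
  simp at this

lemma nu_ne : K.ν ≠ 0 := by
  intro h
  have := K.hmn
  rw [h] at this
  simp at this

lemma D_ne : K.μ * K.ν ≠ 0 := mul_ne_zero K.mu_ne K.nu_ne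

lemma Tif1 : K.Ti K.f1 = ((K.μ * K.ν)⁻¹ * K.a0) • K.f1 - ((K.μ * K.ν)⁻¹ * K.b0) • K.f2 := by
  have hD := K.D_ne
  have h : K.T (((K.μ * K.ν)⁻¹ * K.a0) • K.f1 - ((K.μ * K.ν)⁻¹ * K.b0) • K.f2) = K.f1 := by
    rw [map_sub, map_smul, map_smul, K.Tf1, K.Tf2]
    have hab : K.a0 * K.a0 - K.b0 * K.b0 = K.μ * K.ν := by
      simp only [a0, b0]; ring
    match_scalars
    · linear_combination (K.μ * K.ν)⁻¹ * hab + inv_mul_cancel₀ hD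
    · field_simp
      ring
  conv_lhs => rw [← h]
  rw [K.hTi2]

lemma Tif2 : K.Ti K.f2 = (-((K.μ * K.ν)⁻¹ * K.b0)) • K.f1 + ((K.μ * K.ν)⁻¹ * K.a0) • K.f2 := by
  have hD := K.D_ne
  have h : K.T ((-((K.μ * K.ν)⁻¹ * K.b0)) • K.f1 + ((K.μ * K.ν)⁻¹ * K.a0) • K.f2) = K.f2 := by
    rw [map_add, map_smul, map_smul, K.Tf1, K.Tf2]
    have hab : K.a0 * K.a0 - K.b0 * K.b0 = K.μ * K.ν := by
      simp only [a0, b0]; ring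
    match_scalars
    · field_simp
      ring
    · linear_combination (K.μ * K.ν)⁻¹ * hab + inv_mul_cancel₀ hD
  conv_lhs => rw [← h]
  rw [K.hTi2]

lemma A_Tm_f1 (m : H × ℂ) (h1 : formA m K.f1 = 0) (h2 : formA m K.f2 = 0) :
    formA (K.T m) K.f1 = 0 := by
  have h := K.hA m (K.Ti K.f1)
  rw [K.hTi1] at h
  rw [h, K.Tif1, fA_sub_right, fA_smul_right, fA_smul_right, h1, h2]
  ring

lemma A_Tm_f2 (m : H × ℂ) (h1 : formA m K.f1 = 0) (h2 : formA m K.f2 = 0) :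
    formA (K.T m) K.f2 = 0 := by
  have h := K.hA m (K.Ti K.f2)
  rw [K.hTi1] at h
  rw [h, K.Tif2, fA_add_right, fA_smul_right, fA_smul_right, h1, h2]
  ring

lemma A_Tim_f1 (m : H × ℂ) (h1 : formA m K.f1 = 0) (h2 : formA m K.f2 = 0) :
    formA (K.Ti m) K.f1 = 0 := by
  have h := K.hA (K.Ti m) K.f1
  rw [K.hTi1] at h
  rw [← h, K.Tf1, fA_add_right, fA_smul_right, fA_smul_right, h1, h2]
  ring

lemma A_Tim_f2 (m : H × ℂ) (h1 : formA m K.f1 = 0) (h2 : formA m K.f2 = 0) :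
    formA (K.Ti m) K.f2 = 0 := by
  have h := K.hA (K.Ti m) K.f2
  rw [K.hTi1] at h
  rw [← h, K.Tf2, fA_add_right, fA_smul_right, fA_smul_right, h1, h2]
  ring

lemma Phi_decomp (c1 c2 : ℂ) (m : H × ℂ) (hm : formA m K.f2 = 0) :
    K.Phi (c1 • K.f1 + c2 • K.f2 + m) = c1 • K.f1 - c2 • K.f2 + m := by
  rw [K.Phi_apply, fA_add_left, fA_add_left, fA_smul_left, fA_smul_left,
    K.A_f1_f2, K.A_f2_f2, hm]
  match_scalars <;> ring

/-! ### The commutation identity -/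

lemma comm_core (v : H × ℂ) :
    K.Phi (K.Ti (K.Phi (K.T v))) = K.T (K.Phi (K.Ti (K.Phi v))) := by
  set a := formA v K.f1 with ha
  set b := formA v K.f2 with hb
  set n := K.nn v with hn
  have hn1 : formA n K.f1 = 0 := K.A_nn_f1 v
  have hn2 : formA n K.f2 = 0 := K.A_nn_f2 v
  have hv : v = a • K.f1 + (-b) • K.f2 + n := by
    rw [ha, hb, hn]
    conv_lhs => rw [K.decomp v]
    module
  -- left side
  have st1 : K.T v = (a * K.a0 - b * K.b0) • K.f1 + (a * K.b0 - b * K.a0) • K.f2 + K.T n := by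
    conv_lhs => rw [hv]
    rw [map_add, map_add, map_smul, map_smul, K.Tf1, K.Tf2]
    match_scalars <;> ring
  have st2 : K.Phi (K.T v)
      = (a * K.a0 - b * K.b0) • K.f1 - (a * K.b0 - b * K.a0) • K.f2 + K.T n := by
    rw [st1, K.Phi_decomp _ _ _ (K.A_Tm_f2 n hn1 hn2)]
  have st3 : K.Ti (K.Phi (K.T v))
      = ((K.μ * K.ν)⁻¹ * ((a * K.a0 - b * K.b0) * K.a0 + (a * K.b0 - b * K.a0) * K.b0)) • K.f1
        + ((K.μ * K.ν)⁻¹ * (-((a * K.a0 - b * K.b0) * K.b0)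
            - (a * K.b0 - b * K.a0) * K.a0)) • K.f2 + n := by
    rw [st2, map_add, map_sub, map_smul, map_smul, K.Tif1, K.Tif2, K.hTi2]
    match_scalars <;> ring
  have st4 : K.Phi (K.Ti (K.Phi (K.T v)))
      = ((K.μ * K.ν)⁻¹ * ((a * K.a0 - b * K.b0) * K.a0 + (a * K.b0 - b * K.a0) * K.b0)) • K.f1
        - ((K.μ * K.ν)⁻¹ * (-((a * K.a0 - b * K.b0) * K.b0)
            - (a * K.b0 - b * K.a0) * K.a0)) • K.f2 + n := by
    rw [st3, K.Phi_decomp _ _ _ hn2]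
  -- right side
  have st5 : K.Phi v = a • K.f1 + b • K.f2 + n := by
    conv_lhs => rw [hv]
    rw [K.Phi_decomp _ _ _ hn2]
    match_scalars <;> ring
  have st6 : K.Ti (K.Phi v)
      = ((K.μ * K.ν)⁻¹ * (a * K.a0 - b * K.b0)) • K.f1
        + ((K.μ * K.ν)⁻¹ * (-(a * K.b0) + b * K.a0)) • K.f2 + K.Ti n := by
    rw [st5, map_add, map_add, map_smul, map_smul, K.Tif1, K.Tif2]
    match_scalars <;> ring
  have st7 : K.Phi (K.Ti (K.Phi v))
      = ((K.μ * K.ν)⁻¹ * (a * K.a0 - b * K.b0)) • K.f1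
        - ((K.μ * K.ν)⁻¹ * (-(a * K.b0) + b * K.a0)) • K.f2 + K.Ti n := by
    rw [st6, K.Phi_decomp _ _ _ (K.A_Tim_f2 n hn1 hn2)]
  rw [st4, st7, map_add, map_sub, map_smul, map_smul, K.Tf1, K.Tf2, K.hTi1]
  match_scalars <;> ring


/-! ### Assembly lemmas -/

lemma SinvS (v : H × ℂ) : K.Sinv (K.S v) = v := K.left_inv v

lemma RA (p q : H × ℂ) :
    formA (K.S (K.T (K.Sinv p))) (K.S (K.T (K.Sinv q))) = formA p q := by
  rw [K.SA, K.hA, ← K.SA (K.Sinv p) (K.Sinv q), K.right_inv, K.right_inv]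

lemma RRinv (w : H × ℂ) : K.S (K.T (K.Sinv (K.S (K.Ti (K.Sinv w))))) = w := by
  rw [K.SinvS, K.hTi1, K.right_inv]

lemma adjoint (u v : H × ℂ) :
    ipStd (K.S (K.T (K.Sinv u))) v = ipStd u (Jm (K.S (K.Ti (K.Sinv (Jm v))))) := by
  have h1 : ipStd (K.S (K.T (K.Sinv u))) v = formA (K.S (K.T (K.Sinv u))) (Jm v) := by
    conv_lhs => rw [← Jm_Jm v]
    rw [ip_Jm]
  have h2 : formA (K.S (K.T (K.Sinv u))) (Jm v)
      = formA u (K.S (K.Ti (K.Sinv (Jm v)))) := by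
    conv_lhs => rw [← K.RRinv (Jm v)]
    exact K.RA u _
  rw [h1, h2, ← ip_Jm]

lemma comm_full (w : H × ℂ) :
    Jm (K.S (K.Ti (K.Sinv (Jm (K.S (K.T (K.Sinv w)))))))
      = K.S (K.T (K.Sinv (Jm (K.S (K.Ti (K.Sinv (Jm w))))))) := by
  obtain ⟨v, rfl⟩ : ∃ v, w = K.S v := ⟨K.Sinv w, (K.right_inv w).symm⟩
  simp only [K.JS, K.SinvS]
  rw [K.comm_core]

/-! ### The vector witnessing non-unitarity -/

lemma A_u0_f1 : formA K.u0 K.f1 = r2⁻¹ := by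
  rw [f1, fA_smul_right, conj_r2_inv, fA_add_right, K.A_u0_u0, K.A_u0_wp]
  ring

lemma A_u0_f2 : formA K.u0 K.f2 = -r2⁻¹ := by
  rw [f2, fA_smul_right, conj_r2_inv, fA_sub_right, K.A_u0_u0, K.A_u0_wp]
  ring

lemma nn_u0 : K.nn K.u0 = 0 := by
  have h := r2_mul
  have hne := r2_ne
  rw [nn, K.A_u0_f1, K.A_u0_f2]
  conv_lhs => rw [K.u0_eq]
  match_scalars <;> (field_simp; try ring; try linear_combination h)

lemma S_u0 : K.S K.u0 = ((r2⁻¹ • K.e, r2⁻¹) : H × ℂ) := by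
  rw [K.S_apply, K.A_u0_f1, K.A_u0_f2, K.nn_u0]
  simp

lemma ip_q0 : ipStd (K.S K.u0) (K.S K.u0) = 1 := by
  have h := r2_mul
  have hne := r2_ne
  rw [K.S_u0]
  simp only [ipStd]
  rw [inner_smul_left, inner_smul_right, K.inner_e_e, conj_r2_inv]
  field_simp
  linear_combination -h

lemma R_q0 : K.S (K.T (K.Sinv (K.S K.u0))) = K.μ • K.S K.u0 := by
  rw [K.SinvS, K.Tu0, map_smul]

end Ctx

end HypAux
end AuxHyperbolic

section
variable {H : Type*} [NormedAddCommGroup H] [InnerProductSpace ℂ H] [CompleteSpace H]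

/-- a hyperbolic `T ∈ G` is, up to conjugation in `G`, a normal
non-unitary operator of the Hilbert space `H ⊕ ℂ`. -/
theorem hyperbolic_conj_nonunitary_normal (T : (H × ℂ) →L[ℂ] (H × ℂ))
    (hT : memG T) (hhyp : IsHyperbolicG T) :
    ∃ S : (H × ℂ) ≃L[ℂ] (H × ℂ), memG (S : (H × ℂ) →L[ℂ] (H × ℂ)) ∧
      -- R = S ∘ T ∘ S⁻¹ is a normal operator: it admits a Hilbert-space adjoint
      -- (w.r.t. the standard inner ℂ product of H ⊕ ℂ) commuting with it ...
      (∃ Radj : (H × ℂ) →L[ℂ] (H × ℂ),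
        (∀ u v : H × ℂ,
          ipStd ((S.toContinuousLinearMap ∘L T ∘L S.symm.toContinuousLinearMap) u) v
            = ipStd u (Radj v)) ∧
        Radj ∘L (S.toContinuousLinearMap ∘L T ∘L S.symm.toContinuousLinearMap)
          = (S.toContinuousLinearMap ∘L T ∘L S.symm.toContinuousLinearMap) ∘L Radj) ∧
      -- ... but R is not unitary: it does not preserve the standard inner ℂ product
      ¬ (∀ u v : H × ℂ,
          ipStd ((S.toContinuousLinearMap ∘L T ∘L S.symm.toContinuousLinearMap) u)
                ((S.toContinuousLinearMap ∘L T ∘L S.symm.toContinuousLinearMap) v)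
            = ipStd u v) := by
  classical
  obtain ⟨hne, x, y, hxy, hfix⟩ := hhyp
  have hxmem : x ∈ fixedBall T := by rw [hfix]; exact Set.mem_insert _ _
  have hymem : y ∈ fixedBall T := by rw [hfix]; exact Set.mem_insert_of_mem _ rfl
  obtain ⟨hx1, μ, hTx⟩ := hxmem
  obtain ⟨hy1, ν, hTy⟩ := hymem
  have hnx : ‖x‖ = 1 := by
    by_contra h
    exact hne ⟨x, lt_of_le_of_ne hx1 h, μ, hTx⟩
  have hny : ‖y‖ = 1 := by
    by_contra h
    exact hne ⟨y, lt_of_le_of_ne hy1 h, ν, hTy⟩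
  have hdre : ((inner ℂ y x : ℂ)).re < 1 := by
    have habs : ‖(inner ℂ y x : ℂ)‖ ≤ 1 := by
      have h := norm_inner_le_norm (𝕜 := ℂ) y x
      rw [hnx, hny] at h
      simpa using h
    have h1 : ((inner ℂ y x : ℂ)).re ≤ 1 := le_trans (Complex.re_le_norm _) habs
    rcases eq_or_lt_of_le h1 with h | h
    · exfalso
      have hsq : Complex.normSq ((inner ℂ y x : ℂ)) ≤ 1 := by
        rw [← Complex.sq_norm]
        nlinarith [norm_nonneg ((inner ℂ y x : ℂ))]
      have him : ((inner ℂ y x : ℂ)).im = 0 := by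
        have := Complex.normSq_apply ((inner ℂ y x : ℂ))
        nlinarith
      have hd1 : (inner ℂ y x : ℂ) = 1 := by
        apply Complex.ext <;> simp [h, him]
      exact hxy ((inner_eq_one_iff_of_norm_eq_one hny hnx).mp hd1).symm
    · exact h
  set c : ℂ := (inner ℂ y x : ℂ) - 1 with hcdef
  have hc_ne : c ≠ 0 := by
    rw [hcdef]
    intro h
    have hd : (inner ℂ y x : ℂ) = 1 := by linear_combination h
    exact hxy ((inner_eq_one_iff_of_norm_eq_one hny hnx).mp hd).symm
  have hmn : μ * (starRingEnd ℂ) ν = 1 := by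
    have h := hT.2 ((x, 1) : H × ℂ) ((y, 1) : H × ℂ)
    rw [hTx, hTy, HypAux.fA_smul_left, HypAux.fA_smul_right] at h
    have hAc : formA ((x, 1) : H × ℂ) ((y, 1) : H × ℂ) = c := by
      rw [hcdef]; simp [formA]
    rw [hAc] at h
    have h2 : (μ * (starRingEnd ℂ) ν - 1) * c = 0 := by linear_combination h
    rcases mul_eq_zero.mp h2 with h3 | h3
    · linear_combination h3
    · exact absurd h3 hc_ne
  have hmu : μ * (starRingEnd ℂ) μ ≠ 1 := by
    intro huu
    have hm0 : μ ≠ 0 := by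
      intro h0; rw [h0] at hmn; simp at hmn
    have hnm : ν = μ := by
      have hconj : (starRingEnd ℂ) ν = (starRingEnd ℂ) μ :=
        mul_left_cancel₀ hm0 (hmn.trans huu.symm)
      have := congrArg (starRingEnd ℂ) hconj
      simpa using this
    apply hne
    refine ⟨(2⁻¹ : ℂ) • (x + y), ?_, μ, ?_⟩
    · have hre2 : RCLike.re (inner ℂ x y : ℂ) < 1 := by
        have hconj : (inner ℂ x y : ℂ) = (starRingEnd ℂ) (inner ℂ y x : ℂ) :=
          (inner_conj_symm _ _).symm
        have h9 : ((starRingEnd ℂ) (inner ℂ y x : ℂ)).re < 1 := by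
          rw [Complex.conj_re]; exact hdre
        rw [hconj]
        exact h9
      have hsq := norm_add_sq (𝕜 := ℂ) x y
      rw [hnx, hny] at hsq
      have h4 : ‖x + y‖ ^ 2 < 4 := by
        rw [hsq]; linarith
      have h2 : ‖x + y‖ < 2 := by nlinarith [norm_nonneg (x + y)]
      rw [norm_smul]
      have h5 : ‖(2⁻¹ : ℂ)‖ = 2⁻¹ := by norm_num
      rw [h5]
      linarith
    · have h1 : T (((x, 1) : H × ℂ) + ((y, 1) : H × ℂ))
          = μ • ((((x, 1) : H × ℂ)) + ((y, 1) : H × ℂ)) := by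
        rw [map_add, hTx, hTy, hnm, smul_add]
      have h2 : T ((2⁻¹ : ℂ) • ((((x, 1) : H × ℂ)) + ((y, 1) : H × ℂ)))
          = μ • ((2⁻¹ : ℂ) • ((((x, 1) : H × ℂ)) + ((y, 1) : H × ℂ))) := by
        rw [map_smul, h1, smul_comm]
      have h3 : ((2⁻¹ : ℂ) • ((((x, 1) : H × ℂ)) + ((y, 1) : H × ℂ)))
          = ((((2⁻¹ : ℂ) • (x + y), 1)) : H × ℂ) := by
        rw [Prod.ext_iff]
        constructor
        · simp
        · simp; norm_num
      rw [h3] at h2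
      exact h2
  have hker : T.ker = ⊥ := LinearMap.ker_eq_bot.mpr hT.1.1
  have hrange : T.range = ⊤ := LinearMap.range_eq_top.mpr hT.1.2
  let Te : (H × ℂ) ≃L[ℂ] (H × ℂ) := ContinuousLinearEquiv.ofBijective T hker hrange
  have hTe : ∀ w, Te w = T w := fun w => rfl
  have hp : c.re < 0 := by
    rw [hcdef]
    simpa using sub_neg.mpr hdre
  have hnsq : 0 < Complex.normSq c := Complex.normSq_pos.mpr hc_ne
  have hdisc : 16 * c.re ^ 2
      - 4 * (2 * Complex.normSq c + 2 * Complex.normSq c * c.re + 2 * (c ^ 2).re)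
      = 8 * (-c.re) * Complex.normSq c := by
    have hc2re : (c ^ 2).re = c.re * c.re - c.im * c.im := by
      rw [sq, Complex.mul_re]
    rw [Complex.normSq_apply, hc2re]
    ring
  obtain ⟨s, hquad0, hgam0⟩ := HypAux.exists_root c.re (Complex.normSq c)
    (2 * Complex.normSq c + 2 * Complex.normSq c * c.re + 2 * (c ^ 2).re) hp hnsq hdisc
  let K : HypAux.Ctx H :=
    { x := x, y := y, μ := μ, ν := ν, T := T,
      Ti := Te.symm.toContinuousLinearMap, s := s, c := c,
      hxy := hxy, hnx := hnx, hny := hny, hcdef := hcdef,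
      hA := hT.2, hTx := hTx, hTy := hTy,
      hTi1 := fun z => by
        show T (Te.symm z) = z
        rw [← hTe]
        exact Te.apply_symm_apply z,
      hTi2 := fun z => by
        show Te.symm (T z) = z
        rw [← hTe]
        exact Te.symm_apply_apply z,
      hmn := hmn, hquad := by linear_combination hquad0, hgam := hgam0 }
  have hcoe1 : K.Se.toContinuousLinearMap = K.S := ContinuousLinearMap.ext (fun w => rfl)
  have hcoe2 : K.Se.symm.toContinuousLinearMap = K.Sinv := ContinuousLinearMap.ext (fun w => rfl)
  refine ⟨K.Se, ⟨?_, ?_⟩, ⟨HypAux.Jm ∘L (K.S ∘L (K.Ti ∘L K.Sinv)) ∘L HypAux.Jm, ?_, ?_⟩, ?_⟩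
  · exact K.Se.bijective
  · intro u v
    exact K.SA u v
  · intro u v
    rw [hcoe1, hcoe2]
    simp only [ContinuousLinearMap.comp_apply]
    exact K.adjoint u v
  · rw [hcoe1, hcoe2]
    apply ContinuousLinearMap.ext
    intro w
    simp only [ContinuousLinearMap.comp_apply]
    exact K.comm_full w
  · rw [hcoe1, hcoe2]
    intro hcon
    have h' := hcon (K.S K.u0) (K.S K.u0)
    simp only [ContinuousLinearMap.comp_apply] at h'
    rw [K.R_q0, HypAux.ip_smul, K.ip_q0] at h'
    exact hmu (by linear_combination h')


end
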